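/- arXiv:1211.3005 — 3 statements merged into one kernel-verified Lean document; each statement's English description precedes it below -/
import Mathlib

section
/- For all x ≥ 0 and all β̂ ∈ [0,1), one has atanh(β̂ · tanh x) ≥ β̂·x − (β̂ / (3(1 − β̂²)))·x³. -/
/-- Monotonicity from derivative: endpoint comparison. -/
private lemma deriv_ge_aux (f f' : ℝ → ℝ) {a b : ℝ} (hab : a ≤ b)
    (hd : ∀ x ∈ Set.Icc a b, HasDerivAt f (f' x) x)
    (hpos : ∀ x ∈ Set.Ioo a b, 0 ≤ f' x) : f a ≤ f b := by
  have hm : MonotoneOn f (Set.Icc a b) := by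
    apply monotoneOn_of_deriv_nonneg (convex_Icc a b)
    · exact fun x hx => (hd x hx).continuousAt.continuousWithinAt
    · intro x hx
      rw [interior_Icc] at hx
      exact (hd x (Set.mem_Icc_of_Ioo hx)).differentiableAt.differentiableWithinAt
    · intro x hx
      rw [interior_Icc] at hx
      rw [(hd x (Set.mem_Icc_of_Ioo hx)).deriv]
      exact hpos x hx
  exact hm (Set.left_mem_Icc.2 hab) (Set.right_mem_Icc.2 hab) hab

private lemma tanh_hasDerivAt (x : ℝ) :
    HasDerivAt Real.tanh (1 / Real.cosh x ^ 2) x := by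
  have h := ((Real.hasDerivAt_sinh x).div (Real.hasDerivAt_cosh x)
    (ne_of_gt (Real.cosh_pos x)))
  have h1 : Real.cosh x * Real.cosh x - Real.sinh x * Real.sinh x = 1 := by
    nlinarith [Real.cosh_sq_sub_sinh_sq x]
  rw [h1] at h
  have hfun : Real.tanh = fun y => Real.sinh y / Real.cosh y :=
    funext fun y => Real.tanh_eq_sinh_div_cosh y
  rw [hfun]
  exact h

private lemma sinh_le_mul_cosh {x : ℝ} (hx : 0 ≤ x) :
    Real.sinh x ≤ x * Real.cosh x := by
  have h := deriv_ge_aux (fun t => t * Real.cosh t - Real.sinh t)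
      (fun t => t * Real.sinh t) hx
      (fun t _ => by
        have := ((hasDerivAt_id t).mul (Real.hasDerivAt_cosh t)).sub
          (Real.hasDerivAt_sinh t)
        exact this.congr_deriv (by simp [mul_comm]))
      (fun t ht => mul_nonneg ht.1.le ((Real.sinh_nonneg_iff.2 ht.1.le)))
  simpa using h

private lemma tanh_nonneg {x : ℝ} (hx : 0 ≤ x) : 0 ≤ Real.tanh x := by
  rw [Real.tanh_eq_sinh_div_cosh]
  exact div_nonneg (Real.sinh_nonneg_iff.2 hx) (Real.cosh_pos x).le

private lemma tanh_le_self {x : ℝ} (hx : 0 ≤ x) : Real.tanh x ≤ x := by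
  rw [Real.tanh_eq_sinh_div_cosh, div_le_iff₀ (Real.cosh_pos x)]
  simpa [mul_comm] using sinh_le_mul_cosh hx

private lemma tanh_lt_one (x : ℝ) : Real.tanh x < 1 := by
  rw [Real.tanh_eq_sinh_div_cosh, div_lt_one (Real.cosh_pos x)]
  have h : Real.cosh x - Real.sinh x = Real.exp (-x) := Real.cosh_sub_sinh x
  nlinarith [Real.exp_pos (-x)]

private lemma tanh_lower {x : ℝ} (hx : 0 ≤ x) :
    x - x ^ 3 / 3 ≤ Real.tanh x := by
  have h := deriv_ge_aux (fun t => Real.tanh t - t + t ^ 3 / 3)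
      (fun t => 1 / Real.cosh t ^ 2 - 1 + t ^ 2) hx
      (fun t _ => by
        have := ((tanh_hasDerivAt t).sub (hasDerivAt_id t)).add
          ((hasDerivAt_pow 3 t).div_const 3)
        exact this.congr_deriv (by norm_num))
      (fun t ht => by
        have h1 : Real.tanh t ≤ t := tanh_le_self ht.1.le
        have h2 : 0 ≤ Real.tanh t := tanh_nonneg ht.1.le
        have h3 : 1 / Real.cosh t ^ 2 - 1 = -Real.tanh t ^ 2 := by
          rw [Real.tanh_eq_sinh_div_cosh]
          have hc := Real.cosh_pos t
          have := Real.cosh_sq_sub_sinh_sq t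
          field_simp
          nlinarith
        show 0 ≤ 1 / Real.cosh t ^ 2 - 1 + t ^ 2
        rw [h3]
        nlinarith)
  have h' : (0:ℝ) ≤ Real.tanh x - x + x ^ 3 / 3 := by
    simpa [Real.tanh_zero] using h
  linarith

/-- The inverse hyperbolic tangent. -/
noncomputable def artanh (x : ℝ) : ℝ := Real.log ((1 + x) / (1 - x)) / 2

private lemma self_le_artanh {y : ℝ} (hy0 : 0 ≤ y) (hy1 : y < 1) :
    y ≤ artanh y := by
  have key := deriv_ge_aux
      (fun t => (Real.log (1 + t) - Real.log (1 - t)) / 2 - t)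
      (fun t => (1 / (1 + t) + 1 / (1 - t)) / 2 - 1) hy0
      (fun t ht => by
        have h1 : (0:ℝ) < 1 + t := by linarith [ht.1]
        have h2 : (0:ℝ) < 1 - t := by linarith [ht.2.trans_lt hy1]
        have ha : HasDerivAt (fun t : ℝ => Real.log (1 + t)) (1 / (1 + t)) t := by
          have := (Real.hasDerivAt_log h1.ne').comp t
            ((hasDerivAt_id t).const_add 1)
          exact this.congr_deriv (by simp)
        have hb : HasDerivAt (fun t : ℝ => Real.log (1 - t)) (-(1 / (1 - t))) t := by
          have := (Real.hasDerivAt_log h2.ne').comp t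
            ((hasDerivAt_id t).neg.const_add 1)
          exact this.congr_deriv (by field_simp)
        have := ((ha.sub hb).div_const 2).sub (hasDerivAt_id t)
        exact this.congr_deriv (by ring))
      (fun t ht => by
        have h1 : (0:ℝ) < 1 + t := by linarith [ht.1]
        have h2 : (0:ℝ) < 1 - t := by linarith [ht.2.trans hy1]
        have : (1:ℝ) ≤ (1 / (1 + t) + 1 / (1 - t)) / 2 := by
          rw [le_div_iff₀ (by norm_num : (0:ℝ) < 2)]
          rw [div_add_div _ _ h1.ne' h2.ne', le_div_iff₀ (by positivity)]
          nlinarith [sq_nonneg t]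
        linarith)
  have h1 : (0:ℝ) < 1 + y := by linarith
  have h2 : (0:ℝ) < 1 - y := by linarith
  have hlog : artanh y = (Real.log (1 + y) - Real.log (1 - y)) / 2 := by
    rw [artanh, Real.log_div h1.ne' h2.ne']
  simp only [Real.log_one, add_zero, sub_zero, Real.log_zero] at key
  rw [hlog]
  simpa using key

/-- For all `x ≥ 0` and `β̂ ∈ [0,1)`,
`atanh (β̂ * tanh x) ≥ β̂ * x - (β̂ / (3 * (1 - β̂^2))) * x^3`. -/
theorem lower_bound_xi (x b : ℝ) (hx : 0 ≤ x) (hb0 : 0 ≤ b) (hb1 : b < 1) :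
    b * x - (b / (3 * (1 - b ^ 2))) * x ^ 3 ≤ artanh (b * Real.tanh x) := by
  have ht0 : 0 ≤ Real.tanh x := tanh_nonneg hx
  have ht1 : Real.tanh x < 1 := tanh_lt_one x
  have hy0 : 0 ≤ b * Real.tanh x := mul_nonneg hb0 ht0
  have hy1 : b * Real.tanh x < 1 := by nlinarith
  have h1 : b * Real.tanh x ≤ artanh (b * Real.tanh x) := self_le_artanh hy0 hy1
  have h2 : b * (x - x ^ 3 / 3) ≤ b * Real.tanh x :=
    mul_le_mul_of_nonneg_left (tanh_lower hx) hb0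
  have hb2 : 0 < 1 - b ^ 2 := by nlinarith
  have h3 : b * x - (b / (3 * (1 - b ^ 2))) * x ^ 3 ≤ b * (x - x ^ 3 / 3) := by
    have hx3 : 0 ≤ x ^ 3 := by positivity
    have : b / 3 ≤ b / (3 * (1 - b ^ 2)) := by
      apply div_le_div_of_nonneg_left hb0 (by positivity)
      nlinarith
    nlinarith
  linarith
end

section
/- The function x ↦ atanh(β̂ · tanh x) is concave on [0,∞) for every β̂ ∈ [0,1); equivalently, its second derivative ξ''(x) = −2β̂(1−β̂²)·tanh(x)·(1−tanh²x)/(1−β̂² tanh²x)² is nonpositive for x ≥ 0. -/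
lemma tanh_sq_lt_one' (x : ℝ) : Real.tanh x ^ 2 < 1 := by
  have hc := Real.cosh_pos x
  rw [Real.tanh_eq_sinh_div_cosh, div_pow, div_lt_one (by positivity)]
  nlinarith [Real.cosh_sq x]

lemma hasDerivAt_tanh' (x : ℝ) :
    HasDerivAt Real.tanh (1 - Real.tanh x ^ 2) x := by
  have hc := Real.cosh_pos x
  have h := (Real.hasDerivAt_sinh x).div (Real.hasDerivAt_cosh x) hc.ne'
  have hfun : Real.tanh = fun y => Real.sinh y / Real.cosh y := by
    funext y; exact Real.tanh_eq_sinh_div_cosh y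
  rw [hfun]
  refine h.congr_deriv ?_
  show _ = 1 - (Real.sinh x / Real.cosh x) ^ 2
  have h2 := Real.cosh_sq x
  field_simp

lemma tanh_strictMono' : StrictMono Real.tanh := by
  apply strictMono_of_deriv_pos
  intro x
  rw [(hasDerivAt_tanh' x).deriv]
  nlinarith [tanh_sq_lt_one' x]

lemma hasDerivAt_xi (b : ℝ) (hb0 : 0 ≤ b) (hb1 : b < 1) (x : ℝ) :
    HasDerivAt (fun x => artanh (b * Real.tanh x))
      (b * (1 - Real.tanh x ^ 2) / (1 - b ^ 2 * Real.tanh x ^ 2)) x := by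
  have hsq : ∀ y : ℝ, b ^ 2 * Real.tanh y ^ 2 < 1 := fun y => by
    nlinarith [tanh_sq_lt_one' y, sq_nonneg (Real.tanh y), sq_nonneg b, sq_nonneg (b * Real.tanh y)]
  have h1 : ∀ y : ℝ, 0 < 1 + b * Real.tanh y := fun y => by
    nlinarith [hsq y, sq_nonneg (1 + b * Real.tanh y)]
  have h2 : ∀ y : ℝ, 0 < 1 - b * Real.tanh y := fun y => by
    nlinarith [hsq y, sq_nonneg (1 - b * Real.tanh y)]
  have hfun : (fun x => artanh (b * Real.tanh x)) =
      fun y => (Real.log (1 + b * Real.tanh y) - Real.log (1 - b * Real.tanh y)) / 2 := by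
    funext y
    rw [artanh, Real.log_div (h1 y).ne' (h2 y).ne']
  rw [hfun]
  have d1 : HasDerivAt (fun y => 1 + b * Real.tanh y) (b * (1 - Real.tanh x ^ 2)) x :=
    (((hasDerivAt_tanh' x).const_mul b)).const_add 1
  have d2 : HasDerivAt (fun y => 1 - b * Real.tanh y) (-(b * (1 - Real.tanh x ^ 2))) x :=
    (((hasDerivAt_tanh' x).const_mul b)).const_sub 1
  have := ((d1.log (h1 x).ne').sub (d2.log (h2 x).ne')).div_const 2
  refine this.congr_deriv ?_
  have hs := hsq x
  have e1 := h1 x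
  have e2 := h2 x
  have e3 : (1 - b ^ 2 * Real.tanh x ^ 2) ≠ 0 := by nlinarith
  field_simp
  ring

/-- For every `β̂ ∈ [0,1)`, the function `x ↦ atanh (β̂ * tanh x)` is concave on `[0,∞)`;
equivalently, its second derivative
`ξ''(x) = -2β̂(1-β̂²) tanh x (1 - tanh² x)/(1 - β̂² tanh² x)²` is nonpositive for `x ≥ 0`. -/
theorem concave_xi (b : ℝ) (hb0 : 0 ≤ b) (hb1 : b < 1) :
    ConcaveOn ℝ (Set.Ici 0) (fun x => artanh (b * Real.tanh x)) ∧
    ∀ x : ℝ, 0 ≤ x →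
      -2 * b * (1 - b ^ 2) * Real.tanh x * (1 - Real.tanh x ^ 2) /
          (1 - b ^ 2 * Real.tanh x ^ 2) ^ 2 ≤ 0 := by
  have htm : StrictMono Real.tanh := tanh_strictMono'
  have htnn : ∀ x : ℝ, 0 ≤ x → 0 ≤ Real.tanh x := fun x hx => by
    have := htm.monotone hx
    simpa [Real.tanh_zero] using this
  constructor
  · have hderiv : ∀ x : ℝ, deriv (fun x => artanh (b * Real.tanh x)) x =
        b * (1 - Real.tanh x ^ 2) / (1 - b ^ 2 * Real.tanh x ^ 2) := fun x =>
      (hasDerivAt_xi b hb0 hb1 x).deriv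
    apply AntitoneOn.concaveOn_of_deriv (convex_Ici 0)
    · exact fun x _ => ((hasDerivAt_xi b hb0 hb1 x).continuousAt).continuousWithinAt
    · exact fun x _ => ((hasDerivAt_xi b hb0 hb1 x).differentiableAt).differentiableWithinAt
    · rw [interior_Ici]
      intro x hx y hy hxy
      rw [hderiv x, hderiv y]
      set t := Real.tanh x with ht
      set s := Real.tanh y with hs
      have hts : t ≤ s := htm.monotone hxy
      have ht0 : 0 ≤ t := htnn x (le_of_lt hx)
      have ht1 : t ^ 2 < 1 := tanh_sq_lt_one' x
      have hs1 : s ^ 2 < 1 := tanh_sq_lt_one' y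
      have hdt : 0 < 1 - b ^ 2 * t ^ 2 := by nlinarith [sq_nonneg b]
      have hds : 0 < 1 - b ^ 2 * s ^ 2 := by nlinarith [sq_nonneg b]
      rw [div_le_div_iff₀ hds hdt]
      have hs0 : 0 ≤ s := ht0.trans hts
      have hst : t ^ 2 ≤ s ^ 2 := by nlinarith
      have key : 0 ≤ b * ((s ^ 2 - t ^ 2) * (1 - b ^ 2)) :=
        mul_nonneg hb0 (mul_nonneg (by linarith) (by nlinarith))
      nlinarith [key]
  · intro x hx
    apply div_nonpos_of_nonpos_of_nonneg
    · have h1 : 0 ≤ Real.tanh x := htnn x hx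
      have h2 : Real.tanh x ^ 2 < 1 := tanh_sq_lt_one' x
      have hb2 : 0 ≤ 1 - b ^ 2 := by nlinarith
      have ht2 : 0 ≤ 1 - Real.tanh x ^ 2 := by linarith
      have := mul_nonneg (mul_nonneg (mul_nonneg (mul_nonneg (by norm_num : (0:ℝ) ≤ 2) hb0) hb2) h1) ht2
      nlinarith
    · positivity
end

section
/- Suppose h is a nonnegative random variable satisfying h =_d B + Σ_{i=1}^K ξ(h_i) with ξ(x) = atanh(β̂ tanh x), β̂ = tanh β ∈ (0,1), B > 0, K a non-negative integer random variable with E[K] = ν and E[K²] < ∞, independent of the i.i.d. copies (h_i) of h, and suppose β̂²ν < 1. Then E[ξ(h)²] ≤ (β̂²ν₂/(1−β̂²ν))·E[ξ(h)]² + B·(Bβ̂² + 2β̂²ν E[ξ(h)])/(1−β̂²ν), where ν₂ = E[K(K−1)]. -/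
open MeasureTheory ProbabilityTheory
open scoped ENNReal

/-- Core rpow inequality. -/
lemma rpow_key {c u : ℝ} (hc0 : 0 ≤ c) (hc1 : c ≤ 1) (hu : 1 ≤ u) :
    (1 + c) * u + (1 - c) ≤ (1 - c) * (u ^ (c + 1) : ℝ) + (1 + c) * u ^ c := by
  set F : ℝ → ℝ := fun v => (1 - c) * v ^ (c + 1) + (1 + c) * v ^ c - (1 + c) * v - (1 - c)
    with hF
  have hderiv : ∀ v : ℝ, 1 < v → HasDerivAt F
      ((1 - c) * ((c + 1) * v ^ (c + 1 - 1)) + (1 + c) * (c * v ^ (c - 1)) - (1 + c)) v := by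
    intro v hv
    have hv0 : v ≠ 0 := by positivity
    have h1 : HasDerivAt (fun v : ℝ => v ^ (c + 1)) ((c + 1) * v ^ (c + 1 - 1)) v :=
      Real.hasDerivAt_rpow_const (Or.inl hv0)
    have h2 : HasDerivAt (fun v : ℝ => v ^ c) (c * v ^ (c - 1)) v :=
      Real.hasDerivAt_rpow_const (Or.inl hv0)
    have h3 : HasDerivAt (fun v : ℝ => (1 + c) * v) (1 + c) v := by
      simpa using (hasDerivAt_id v).const_mul (1 + c)
    exact (((h1.const_mul (1 - c)).add (h2.const_mul (1 + c))).sub h3).sub_const _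
  have hmono : MonotoneOn F (Set.Ici 1) := by
    have hint : interior (Set.Ici (1:ℝ)) = Set.Ioi 1 := interior_Ici
    apply monotoneOn_of_deriv_nonneg (convex_Ici 1)
    · -- continuity
      intro v hv
      have hv0 : v ≠ 0 := by
        have : (1:ℝ) ≤ v := hv
        positivity
      have c1 : ContinuousAt (fun v : ℝ => v ^ (c + 1)) v :=
        Real.continuousAt_rpow_const v _ (Or.inl hv0)
      have c2 : ContinuousAt (fun v : ℝ => v ^ c) v :=
        Real.continuousAt_rpow_const v _ (Or.inl hv0)
      have : ContinuousAt F v := by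
        simp only [hF]
        exact ((((c1.const_mul _).add (c2.const_mul _))).sub
          ((continuous_const.mul continuous_id).continuousAt)).sub continuousAt_const
      exact this.continuousWithinAt
    · intro v hv
      rw [hint] at hv
      exact ((hderiv v hv).differentiableAt).differentiableWithinAt
    · intro v hv
      rw [hint] at hv
      rw [(hderiv v hv).deriv]
      have hv0 : (0:ℝ) < v := lt_trans one_pos hv
      have amgm : (v ^ c) ^ (1 - c) * (v ^ (c - 1)) ^ c ≤ (1 - c) * v ^ c + c * v ^ (c - 1) :=
        Real.geom_mean_le_arith_mean2_weighted (by linarith) hc0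
          (Real.rpow_nonneg hv0.le _) (Real.rpow_nonneg hv0.le _) (by ring)
      have hone : (v ^ c) ^ (1 - c) * (v ^ (c - 1)) ^ c = 1 := by
        rw [← Real.rpow_mul hv0.le c (1 - c), ← Real.rpow_mul hv0.le (c - 1) c,
          ← Real.rpow_add hv0]
        have : c * (1 - c) + (c - 1) * c = 0 := by ring
        rw [this, Real.rpow_zero]
      rw [hone] at amgm
      have : (1:ℝ) ≤ (1 - c) * v ^ c + c * v ^ (c - 1) := amgm
      have hcc : c + 1 - 1 = c := by ring
      rw [hcc]
      nlinarith [this]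
  have h0 : F 1 = 0 := by
    simp [hF, Real.one_rpow]
  have := hmono (Set.self_mem_Ici) hu hu
  rw [h0] at this
  simp only [hF] at this
  linarith

lemma tanh_eq_exp (x : ℝ) :
    Real.tanh x = (Real.exp (2*x) - 1) / (Real.exp (2*x) + 1) := by
  have hE : 0 < Real.exp x := Real.exp_pos x
  rw [Real.tanh_eq_sinh_div_cosh, Real.sinh_eq, Real.cosh_eq, Real.exp_neg, two_mul, Real.exp_add]
  rw [div_eq_div_iff (by positivity) (by positivity)]
  field_simp

lemma tanh_mem {β : ℝ} (hβ : 0 < β) : 0 < Real.tanh β ∧ Real.tanh β < 1 := by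
  rw [tanh_eq_exp]
  have h1 : 1 < Real.exp (2*β) := by
    calc (1:ℝ) = Real.exp 0 := Real.exp_zero.symm
    _ < Real.exp (2*β) := Real.exp_lt_exp.mpr (by linarith)
  exact ⟨div_pos (by linarith) (by linarith), (div_lt_one (by linarith)).mpr (by linarith)⟩

lemma xi_bounds {c x : ℝ} (hc0 : 0 ≤ c) (hc1 : c ≤ 1) (hx : 0 ≤ x) :
    0 ≤ artanh (c * Real.tanh x) ∧ artanh (c * Real.tanh x) ≤ c * x := by
  set E := Real.exp (2*x) with hE
  have hE1 : 1 ≤ E := by rw [hE]; exact Real.one_le_exp (by linarith)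
  have hE0 : 0 < E := lt_of_lt_of_le one_pos hE1
  set N := (1+c)*E + (1-c) with hNd
  set D := (1-c)*E + (1+c) with hDd
  have hN : 0 < N := by nlinarith
  have hD : 0 < D := by nlinarith
  have hfrac : (1 + c * Real.tanh x) / (1 - c * Real.tanh x) = N / D := by
    rw [tanh_eq_exp, ← hE, hNd, hDd]
    have hpos : 0 < 1 - c * ((E-1)/(E+1)) := by
      have : 1 - c * ((E-1)/(E+1)) = D / (E+1) := by
        rw [hDd]; field_simp; ring
      rw [this]; positivity
    rw [div_eq_div_iff hpos.ne' hD.ne']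
    field_simp
    ring
  have hXi : artanh (c * Real.tanh x) = Real.log (N / D) / 2 := by
    rw [artanh, hfrac]
  have hND : D ≤ N := by nlinarith
  constructor
  · rw [hXi]
    have h1 : (1:ℝ) ≤ N / D := (one_le_div hD).mpr hND
    have := Real.log_nonneg h1
    linarith
  · rw [hXi]
    have hkey : N ≤ E ^ c * D :=
      calc N ≤ (1-c) * E ^ (c+1) + (1+c) * E ^ c := rpow_key hc0 hc1 hE1
      _ = E ^ c * D := by rw [Real.rpow_add hE0, Real.rpow_one]; ring
    have hlog : Real.log (N/D) ≤ Real.log (E ^ c) :=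
      Real.log_le_log (div_pos hN hD) ((div_le_iff₀ hD).mpr hkey)
    have hlogE : Real.log (E ^ c) = c * (2*x) := by
      rw [Real.log_rpow hE0, hE, Real.log_exp]
    rw [hlogE] at hlog
    linarith

lemma tanh_measurable : Measurable Real.tanh := by
  have : Real.tanh = fun x => Real.sinh x / Real.cosh x := funext Real.tanh_eq_sinh_div_cosh
  rw [this]
  exact (Real.continuous_sinh.div Real.continuous_cosh fun x => (Real.cosh_pos x).ne').measurable

/-- Second-moment bound for the fixed point of the tree recursion in the finite-variance
case: if `h =_d B + Σ_{i=1}^K ξ(h_i)` with `ξ(x) = atanh(β̂ tanh x)`, `β̂ = tanh β ∈ (0,1)`,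
`B > 0`, `E[K] = ν`, `E[K²] < ∞`, `β̂²ν < 1`, then
`E[ξ(h)²] ≤ (β̂²ν₂/(1-β̂²ν)) E[ξ(h)]² + B (Bβ̂² + 2β̂²ν E[ξ(h)])/(1-β̂²ν)`
where `ν₂ = E[K(K-1)]`. -/
theorem second_moment_bound {Ω : Type*} [MeasurableSpace Ω] (μ : Measure Ω)
    [IsProbabilityMeasure μ] (β B ν ν₂ : ℝ) (hβ : 0 < β) (hB : 0 < B)
    (K : Ω → ℕ) (hKmeas : Measurable K) (h : Ω → ℝ) (hmeas : Measurable h)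
    (H : ℕ → Ω → ℝ) (hHmeas : ∀ i, Measurable (H i))
    (ξ : ℝ → ℝ) (hξ : ξ = fun x => artanh (Real.tanh β * Real.tanh x))
    (hdist : ∀ i, Measure.map (H i) μ = Measure.map h μ)
    (hiid : iIndepFun H μ)
    (hKH : IndepFun K (fun ω i => H i ω) μ)
    (hfix : Measure.map h μ =
      Measure.map (fun ω => B + ∑ i ∈ Finset.range (K ω), ξ (H i ω)) μ)
    (hpos : ∀ᵐ ω ∂μ, 0 ≤ h ω)
    (hK2int : Integrable (fun ω => (K ω : ℝ) ^ 2) μ)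
    (hν : ∫ ω, (K ω : ℝ) ∂μ = ν)
    (hν₂ : ∫ ω, (K ω : ℝ) * ((K ω : ℝ) - 1) ∂μ = ν₂)
    (hcontr : Real.tanh β ^ 2 * ν < 1)
    (hint : Integrable (fun ω => ξ (h ω)) μ)
    (hint2 : Integrable (fun ω => ξ (h ω) ^ 2) μ) :
    ∫ ω, ξ (h ω) ^ 2 ∂μ ≤
      Real.tanh β ^ 2 * ν₂ / (1 - Real.tanh β ^ 2 * ν) * (∫ ω, ξ (h ω) ∂μ) ^ 2 +
        B * (B * Real.tanh β ^ 2 + 2 * Real.tanh β ^ 2 * ν * ∫ ω, ξ (h ω) ∂μ) /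
          (1 - Real.tanh β ^ 2 * ν) := by
  set c := Real.tanh β with hcdef
  obtain ⟨hc0, hc1⟩ := tanh_mem hβ
  set m := ∫ ω, ξ (h ω) ∂μ with hm
  set q := ∫ ω, ξ (h ω) ^ 2 ∂μ with hq
  -- pointwise facts about ξ
  have hξ0 : ∀ x : ℝ, 0 ≤ x → 0 ≤ ξ x := fun x hx => by
    rw [hξ]; exact (xi_bounds hc0.le hc1.le hx).1
  have hξle : ∀ x : ℝ, 0 ≤ x → ξ x ≤ c * x := fun x hx => by
    rw [hξ]; exact (xi_bounds hc0.le hc1.le hx).2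
  have hξm : Measurable ξ := by
    rw [hξ]
    unfold artanh
    exact (Real.measurable_log.comp
      ((measurable_const.add (tanh_measurable.const_mul c)).div
        (measurable_const.sub (tanh_measurable.const_mul c)))).div_const 2
  -- measurability
  have hvec_meas : Measurable (fun ω => (fun i => H i ω)) :=
    measurable_pi_lambda _ hHmeas
  have hSn_meas : ∀ n, Measurable (fun ω => ∑ i ∈ Finset.range n, ξ (H i ω)) := fun n =>
    Finset.measurable_sum _ (fun i _ => hξm.comp (hHmeas i))
  have hS_meas : Measurable (fun ω => ∑ i ∈ Finset.range (K ω), ξ (H i ω)) := by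
    have hF : Measurable (fun p : Ω × ℕ => ∑ i ∈ Finset.range p.2, ξ (H i p.1)) :=
      measurable_from_prod_countable_left (fun n => hSn_meas n)
    exact hF.comp (measurable_id.prodMk hKmeas)
  have hBS_meas : Measurable (fun ω => B + ∑ i ∈ Finset.range (K ω), ξ (H i ω)) :=
    measurable_const.add hS_meas
  -- a.e. nonnegativity
  have hHnn : ∀ᵐ ω ∂μ, ∀ i, 0 ≤ H i ω := by
    rw [ae_all_iff]
    intro i
    rw [ae_iff]
    have h1 : {ω | ¬ 0 ≤ H i ω} = (H i) ⁻¹' (Set.Iio 0) := by ext ω; simp [not_le]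
    rw [h1, ← Measure.map_apply (hHmeas i) measurableSet_Iio, hdist i,
      Measure.map_apply hmeas measurableSet_Iio]
    have h2 : h ⁻¹' (Set.Iio 0) = {ω | ¬ 0 ≤ h ω} := by ext ω; simp [not_le]
    rw [h2, ← ae_iff]
    exact hpos
  have hYnn : ∀ᵐ ω ∂μ, ∀ i, 0 ≤ ξ (H i ω) := hHnn.mono fun ω hω i => hξ0 _ (hω i)
  have hSnn : ∀ᵐ ω ∂μ, ∀ n, 0 ≤ ∑ i ∈ Finset.range n, ξ (H i ω) :=
    hYnn.mono fun ω hω n => Finset.sum_nonneg fun i _ => hω i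
  have hξh_nn : ∀ᵐ ω ∂μ, 0 ≤ ξ (h ω) := hpos.mono fun ω hω => hξ0 _ hω
  have hm0 : 0 ≤ m := by rw [hm]; exact integral_nonneg_of_ae hξh_nn
  have hq0 : 0 ≤ q := by rw [hq]; exact integral_nonneg fun ω => sq_nonneg _
  have hν0 : 0 ≤ ν := by rw [← hν]; exact integral_nonneg fun ω => Nat.cast_nonneg _
  have hν₂0 : 0 ≤ ν₂ := by
    rw [← hν₂]
    refine integral_nonneg fun ω => ?_
    show (0:ℝ) ≤ (K ω : ℝ) * ((K ω : ℝ) - 1)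
    rcases Nat.eq_zero_or_pos (K ω) with h0 | h0
    · simp [h0]
    · have h1 : (1:ℝ) ≤ (K ω : ℝ) := by exact_mod_cast h0
      nlinarith
  -- moments of the Y i
  have hYint : ∀ i, Integrable (fun ω => ξ (H i ω)) μ := by
    intro i
    have h1 : Integrable ξ (Measure.map h μ) :=
      (integrable_map_measure hξm.aestronglyMeasurable hmeas.aemeasurable).mpr hint
    rw [← hdist i] at h1
    exact (integrable_map_measure hξm.aestronglyMeasurable (hHmeas i).aemeasurable).mp h1
  have hYm : ∀ i, ∫ ω, ξ (H i ω) ∂μ = m := by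
    intro i
    have e1 : ∫ x, ξ x ∂(Measure.map (H i) μ) = ∫ ω, ξ (H i ω) ∂μ :=
      integral_map (hHmeas i).aemeasurable hξm.aestronglyMeasurable
    have e2 : ∫ x, ξ x ∂(Measure.map h μ) = ∫ ω, ξ (h ω) ∂μ :=
      integral_map hmeas.aemeasurable hξm.aestronglyMeasurable
    rw [← e1, hdist i, e2, hm]
  have hY2int : ∀ i, Integrable (fun ω => ξ (H i ω) ^ 2) μ := by
    intro i
    have h1 : Integrable (fun x => ξ x ^ 2) (Measure.map h μ) :=
      (integrable_map_measure (hξm.pow_const 2).aestronglyMeasurable hmeas.aemeasurable).mpr hint2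
    rw [← hdist i] at h1
    exact (integrable_map_measure (hξm.pow_const 2).aestronglyMeasurable
      (hHmeas i).aemeasurable).mp h1
  have hY2m : ∀ i, ∫ ω, ξ (H i ω) ^ 2 ∂μ = q := by
    intro i
    have e1 : ∫ x, ξ x ^ 2 ∂(Measure.map (H i) μ) = ∫ ω, ξ (H i ω) ^ 2 ∂μ :=
      integral_map (hHmeas i).aemeasurable (hξm.pow_const 2).aestronglyMeasurable
    have e2 : ∫ x, ξ x ^ 2 ∂(Measure.map h μ) = ∫ ω, ξ (h ω) ^ 2 ∂μ :=
      integral_map hmeas.aemeasurable (hξm.pow_const 2).aestronglyMeasurable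
    rw [← e1, hdist i, e2, hq]
  have hcross : ∀ i j, i ≠ j → Integrable (fun ω => ξ (H i ω) * ξ (H j ω)) μ ∧
      ∫ ω, ξ (H i ω) * ξ (H j ω) ∂μ = m * m := by
    intro i j hij
    have hindp : IndepFun (fun ω => ξ (H i ω)) (fun ω => ξ (H j ω)) μ :=
      (hiid.indepFun hij).comp hξm hξm
    refine ⟨hindp.integrable_mul (hYint i) (hYint j), ?_⟩
    have hmul := hindp.integral_mul_eq_mul_integral (hYint i).aestronglyMeasurable
      (hYint j).aestronglyMeasurable
    simp only [Pi.mul_apply] at hmul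
    rw [hmul,
      hYm i, hYm j]
  -- second moment of the partial sums
  have hSn_sq : ∀ n : ℕ, (fun ω => (∑ i ∈ Finset.range n, ξ (H i ω)) ^ 2) =
      fun ω => ∑ i ∈ Finset.range n, ∑ j ∈ Finset.range n, ξ (H i ω) * ξ (H j ω) := by
    intro n; funext ω; rw [sq, Finset.sum_mul_sum]
  have hterm_int : ∀ i j : ℕ, Integrable (fun ω => ξ (H i ω) * ξ (H j ω)) μ := by
    intro i j
    by_cases hij : i = j
    · subst hij
      have := hY2int i
      simpa [sq] using this
    · exact (hcross i j hij).1
  have hSn2int : ∀ n, Integrable (fun ω => (∑ i ∈ Finset.range n, ξ (H i ω)) ^ 2) μ := by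
    intro n
    rw [hSn_sq n]
    exact integrable_finset_sum _ fun i _ => integrable_finset_sum _ fun j _ => hterm_int i j
  have hESn2 : ∀ n : ℕ, ∫ ω, (∑ i ∈ Finset.range n, ξ (H i ω)) ^ 2 ∂μ =
      n * q + n * ((n : ℝ) - 1) * m ^ 2 := by
    intro n
    rw [hSn_sq n, integral_finset_sum _ fun i _ => integrable_finset_sum _ fun j _ =>
      hterm_int i j]
    have e1 : ∀ i ∈ Finset.range n,
        ∫ ω, ∑ j ∈ Finset.range n, ξ (H i ω) * ξ (H j ω) ∂μ = q + ((n : ℝ) - 1) * (m * m) := by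
      intro i hi
      rw [integral_finset_sum _ fun j _ => hterm_int i j]
      have e2 : ∀ j ∈ Finset.range n, ∫ ω, ξ (H i ω) * ξ (H j ω) ∂μ =
          m * m + (if i = j then q - m * m else 0) := by
        intro j _
        by_cases hij : i = j
        · subst hij
          have : ∫ ω, ξ (H i ω) * ξ (H i ω) ∂μ = q := by
            rw [show (fun ω => ξ (H i ω) * ξ (H i ω)) = fun ω => ξ (H i ω) ^ 2 from
              funext fun ω => (sq _).symm]
            exact hY2m i
          rw [this, if_pos rfl]; ring
        · rw [(hcross i j hij).2, if_neg hij]; ring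
      rw [Finset.sum_congr rfl e2, Finset.sum_add_distrib, Finset.sum_const, Finset.card_range,
        Finset.sum_ite_eq, if_pos hi, nsmul_eq_mul]
      ring
    rw [Finset.sum_congr rfl e1, Finset.sum_const, Finset.card_range, nsmul_eq_mul]
    ring
  -- lintegral versions
  have hLYi : ∀ i, ∫⁻ ω, ENNReal.ofReal (ξ (H i ω)) ∂μ = ENNReal.ofReal m := by
    intro i
    rw [← ofReal_integral_eq_lintegral_ofReal (hYint i) (hYnn.mono fun ω hω => hω i), hYm i]
  have hLSn : ∀ n : ℕ, ∫⁻ ω, ENNReal.ofReal (∑ i ∈ Finset.range n, ξ (H i ω)) ∂μ =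
      (n : ℝ≥0∞) * ENNReal.ofReal m := by
    intro n
    have e : ∀ᵐ ω ∂μ, ENNReal.ofReal (∑ i ∈ Finset.range n, ξ (H i ω)) =
        ∑ i ∈ Finset.range n, ENNReal.ofReal (ξ (H i ω)) :=
      hYnn.mono fun ω hω => ENNReal.ofReal_sum_of_nonneg fun i _ => hω i
    have hms : ∀ i ∈ Finset.range n, Measurable (fun ω => ENNReal.ofReal (ξ (H i ω))) :=
      fun i _ => (hξm.comp (hHmeas i)).ennreal_ofReal
    rw [lintegral_congr_ae e, lintegral_finset_sum _ hms]
    simp only [hLYi, Finset.sum_const, Finset.card_range, nsmul_eq_mul]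
  have hLSn2 : ∀ n : ℕ, ∫⁻ ω, ENNReal.ofReal ((∑ i ∈ Finset.range n, ξ (H i ω)) ^ 2) ∂μ =
      ENNReal.ofReal ((n : ℝ) * q + (n : ℝ) * ((n : ℝ) - 1) * m ^ 2) := by
    intro n
    rw [← ofReal_integral_eq_lintegral_ofReal (hSn2int n) (ae_of_all _ fun ω => sq_nonneg _),
      hESn2 n]
  -- independence helper
  have hPmeas : ∀ n : ℕ, MeasurableSet {ω | K ω = n} := fun n =>
    hKmeas (measurableSet_singleton n)
  have hind : ∀ (n : ℕ) (ψ : (ℕ → ℝ) → ℝ≥0∞), Measurable ψ →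
      ∫⁻ ω, (if K ω = n then (1 : ℝ≥0∞) else 0) * ψ (fun i => H i ω) ∂μ =
        μ {ω | K ω = n} * ∫⁻ ω, ψ (fun i => H i ω) ∂μ := by
    intro n ψ hψ
    have hφ : Measurable (fun k : ℕ => if k = n then (1 : ℝ≥0∞) else 0) := measurable_from_top
    have hindep : IndepFun (fun ω => if K ω = n then (1 : ℝ≥0∞) else 0)
        (fun ω => ψ (fun i => H i ω)) μ := hKH.comp hφ hψ
    have hmul := lintegral_mul_eq_lintegral_mul_lintegral_of_indepFun
      (hφ.comp hKmeas) (hψ.comp hvec_meas) hindep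
    have h2 : ∫⁻ ω, (if K ω = n then (1 : ℝ≥0∞) else 0) ∂μ = μ {ω | K ω = n} := by
      have e : (fun ω => if K ω = n then (1 : ℝ≥0∞) else 0) =
          {ω | K ω = n}.indicator (1 : Ω → ℝ≥0∞) := by
        funext ω; by_cases hω : K ω = n <;> simp [hω, Set.indicator_apply]
      rw [e, lintegral_indicator_one (hPmeas n)]
    calc ∫⁻ ω, (if K ω = n then (1 : ℝ≥0∞) else 0) * ψ (fun i => H i ω) ∂μ
        = (∫⁻ ω, (if K ω = n then (1 : ℝ≥0∞) else 0) ∂μ) * ∫⁻ ω, ψ (fun i => H i ω) ∂μ := hmul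
      _ = μ {ω | K ω = n} * ∫⁻ ω, ψ (fun i => H i ω) ∂μ := by rw [h2]
  -- decomposition over the value of K
  have hdecomp : ∀ (G : ℕ → (ℕ → ℝ) → ℝ≥0∞), (∀ n, Measurable (G n)) →
      ∫⁻ ω, G (K ω) (fun i => H i ω) ∂μ =
        ∑' n : ℕ, μ {ω | K ω = n} * ∫⁻ ω, G n (fun i => H i ω) ∂μ := by
    intro G hG
    have e : ∀ ω, G (K ω) (fun i => H i ω) =
        ∑' n : ℕ, (if K ω = n then (1 : ℝ≥0∞) else 0) * G n (fun i => H i ω) := by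
      intro ω
      rw [tsum_eq_single (K ω) (fun b hb => by rw [if_neg (Ne.symm hb), zero_mul])]
      rw [if_pos rfl, one_mul]
    have hmeasn : ∀ n : ℕ, Measurable
        (fun ω => (if K ω = n then (1:ℝ≥0∞) else 0) * G n (fun i => H i ω)) := fun n =>
      ((measurable_from_top (f := fun k : ℕ => if k = n then (1:ℝ≥0∞) else 0)).comp
        hKmeas).mul ((hG n).comp hvec_meas)
    rw [lintegral_congr e, lintegral_tsum fun n => (hmeasn n).aemeasurable]
    exact tsum_congr fun n => hind n (G n) (hG n)
  -- moments of K in ℝ≥0∞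
  have hcastK : Measurable (fun k : ℕ => (k : ℝ)) := measurable_from_top
  have hKint : Integrable (fun ω => (K ω : ℝ)) μ := by
    refine hK2int.mono' (hcastK.comp hKmeas).aestronglyMeasurable (ae_of_all _ fun ω => ?_)
    rw [Real.norm_eq_abs, abs_of_nonneg (Nat.cast_nonneg _)]
    have h1 : K ω ≤ K ω ^ 2 := Nat.le_self_pow two_ne_zero _
    exact_mod_cast h1
  have hK2cast : ∀ k : ℕ, ((k * (k - 1) : ℕ) : ℝ) = (k : ℝ) * ((k : ℝ) - 1) := by
    intro k
    match k with
    | 0 => simp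
    | (k + 1) => rw [Nat.succ_sub_one]; push_cast; ring
  have hK2int' : Integrable (fun ω => ((K ω * (K ω - 1) : ℕ) : ℝ)) μ := by
    refine hK2int.mono' ((hcastK.comp
      ((measurable_from_top (f := fun k : ℕ => k * (k - 1))).comp
        hKmeas))).aestronglyMeasurable (ae_of_all _ fun ω => ?_)
    rw [Real.norm_eq_abs, abs_of_nonneg (Nat.cast_nonneg _)]
    have h1 : K ω * (K ω - 1) ≤ K ω ^ 2 := by
      calc K ω * (K ω - 1) ≤ K ω * K ω := Nat.mul_le_mul_left _ (Nat.sub_le _ _)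
      _ = K ω ^ 2 := (sq _).symm
    exact_mod_cast h1
  have hEK2 : ∫ ω, ((K ω * (K ω - 1) : ℕ) : ℝ) ∂μ = ν₂ := by
    rw [← hν₂]
    exact integral_congr_ae (ae_of_all _ fun ω => hK2cast _)
  have hsumK : ∑' n : ℕ, (n : ℝ≥0∞) * μ {ω | K ω = n} = ENNReal.ofReal ν := by
    have hLK : ∫⁻ ω, ((K ω : ℕ) : ℝ≥0∞) ∂μ = ENNReal.ofReal ν := by
      rw [lintegral_congr (fun ω => (ENNReal.ofReal_natCast (K ω)).symm),
        ← ofReal_integral_eq_lintegral_ofReal hKint (ae_of_all _ fun ω => Nat.cast_nonneg _), hν]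
    rw [← hLK, ← lintegral_map (f := fun n : ℕ => (n : ℝ≥0∞)) measurable_from_top hKmeas,
      lintegral_countable']
    exact tsum_congr fun n => by
      rw [Measure.map_apply hKmeas (measurableSet_singleton n)]
      rfl
  have hsumK2 : ∑' n : ℕ, ((n * (n - 1) : ℕ) : ℝ≥0∞) * μ {ω | K ω = n} =
      ENNReal.ofReal ν₂ := by
    have hLK2 : ∫⁻ ω, ((K ω * (K ω - 1) : ℕ) : ℝ≥0∞) ∂μ = ENNReal.ofReal ν₂ := by
      rw [lintegral_congr (fun ω => (ENNReal.ofReal_natCast (K ω * (K ω - 1))).symm),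
        ← ofReal_integral_eq_lintegral_ofReal hK2int' (ae_of_all _ fun ω => Nat.cast_nonneg _),
        hEK2]
    rw [← hLK2, ← lintegral_map (f := fun n : ℕ => ((n * (n - 1) : ℕ) : ℝ≥0∞))
      measurable_from_top hKmeas, lintegral_countable']
    exact tsum_congr fun n => by
      rw [Measure.map_apply hKmeas (measurableSet_singleton n)]
      rfl
  -- first and second moment of S
  have hLS : ∫⁻ ω, ENNReal.ofReal (∑ i ∈ Finset.range (K ω), ξ (H i ω)) ∂μ =
      ENNReal.ofReal ν * ENNReal.ofReal m := by
    have hG : ∀ n : ℕ, Measurable (fun y : ℕ → ℝ => ENNReal.ofReal (∑ i ∈ Finset.range n, ξ (y i))) :=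
      fun n => (Finset.measurable_sum _ fun i _ => hξm.comp (measurable_pi_apply i)).ennreal_ofReal
    have h1 : ∫⁻ ω, ENNReal.ofReal (∑ i ∈ Finset.range (K ω), ξ (H i ω)) ∂μ =
        ∑' n : ℕ, μ {ω | K ω = n} *
          ∫⁻ ω, ENNReal.ofReal (∑ i ∈ Finset.range n, ξ (H i ω)) ∂μ :=
      hdecomp (fun n y => ENNReal.ofReal (∑ i ∈ Finset.range n, ξ (y i))) hG
    rw [h1]
    calc ∑' n : ℕ, μ {ω | K ω = n} * ∫⁻ ω, ENNReal.ofReal (∑ i ∈ Finset.range n, ξ (H i ω)) ∂μ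
        = ∑' n : ℕ, ((n : ℝ≥0∞) * μ {ω | K ω = n}) * ENNReal.ofReal m := by
          refine tsum_congr fun n => ?_
          rw [hLSn n]; ring
      _ = (∑' n : ℕ, (n : ℝ≥0∞) * μ {ω | K ω = n}) * ENNReal.ofReal m := ENNReal.tsum_mul_right
      _ = ENNReal.ofReal ν * ENNReal.ofReal m := by rw [hsumK]
  have hterm2 : ∀ n : ℕ, ENNReal.ofReal ((n : ℝ) * q + (n : ℝ) * ((n : ℝ) - 1) * m ^ 2) =
      (n : ℝ≥0∞) * ENNReal.ofReal q + ((n * (n - 1) : ℕ) : ℝ≥0∞) * ENNReal.ofReal (m ^ 2) := by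
    intro n
    rw [show (n : ℝ) * ((n : ℝ) - 1) * m ^ 2 = ((n * (n - 1) : ℕ) : ℝ) * m ^ 2 by
      rw [hK2cast n]]
    rw [ENNReal.ofReal_add (mul_nonneg (Nat.cast_nonneg _) hq0)
      (mul_nonneg (Nat.cast_nonneg _) (sq_nonneg _)),
      ENNReal.ofReal_mul (Nat.cast_nonneg _), ENNReal.ofReal_mul (Nat.cast_nonneg _),
      ENNReal.ofReal_natCast, ENNReal.ofReal_natCast]
  have hLS2 : ∫⁻ ω, ENNReal.ofReal ((∑ i ∈ Finset.range (K ω), ξ (H i ω)) ^ 2) ∂μ =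
      ENNReal.ofReal ν * ENNReal.ofReal q + ENNReal.ofReal ν₂ * ENNReal.ofReal (m ^ 2) := by
    have hG : ∀ n : ℕ, Measurable
        (fun y : ℕ → ℝ => ENNReal.ofReal ((∑ i ∈ Finset.range n, ξ (y i)) ^ 2)) := fun n =>
      ((Finset.measurable_sum _ fun i _ => hξm.comp (measurable_pi_apply i)).pow_const
        2).ennreal_ofReal
    have h1 : ∫⁻ ω, ENNReal.ofReal ((∑ i ∈ Finset.range (K ω), ξ (H i ω)) ^ 2) ∂μ =
        ∑' n : ℕ, μ {ω | K ω = n} *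
          ∫⁻ ω, ENNReal.ofReal ((∑ i ∈ Finset.range n, ξ (H i ω)) ^ 2) ∂μ :=
      hdecomp (fun n y => ENNReal.ofReal ((∑ i ∈ Finset.range n, ξ (y i)) ^ 2)) hG
    rw [h1]
    calc ∑' n : ℕ, μ {ω | K ω = n} *
          ∫⁻ ω, ENNReal.ofReal ((∑ i ∈ Finset.range n, ξ (H i ω)) ^ 2) ∂μ
        = ∑' n : ℕ, (((n : ℝ≥0∞) * μ {ω | K ω = n}) * ENNReal.ofReal q +
            (((n * (n - 1) : ℕ) : ℝ≥0∞) * μ {ω | K ω = n}) * ENNReal.ofReal (m ^ 2)) := by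
          refine tsum_congr fun n => ?_
          rw [hLSn2 n, hterm2 n]; ring
      _ = (∑' n : ℕ, ((n : ℝ≥0∞) * μ {ω | K ω = n})) * ENNReal.ofReal q +
          (∑' n : ℕ, (((n * (n - 1) : ℕ) : ℝ≥0∞) * μ {ω | K ω = n})) * ENNReal.ofReal (m ^ 2) := by
          rw [ENNReal.tsum_add, ENNReal.tsum_mul_right, ENNReal.tsum_mul_right]
      _ = ENNReal.ofReal ν * ENNReal.ofReal q + ENNReal.ofReal ν₂ * ENNReal.ofReal (m ^ 2) := by
          rw [hsumK, hsumK2]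
  -- pass the fixed-point identity to an inequality
  have hmain_eq : q = ∫ ω, ξ (B + ∑ i ∈ Finset.range (K ω), ξ (H i ω)) ^ 2 ∂μ := by
    have e1 : ∫ x, ξ x ^ 2 ∂(Measure.map h μ) = ∫ ω, ξ (h ω) ^ 2 ∂μ :=
      integral_map hmeas.aemeasurable (hξm.pow_const 2).aestronglyMeasurable
    have e2 : ∫ x, ξ x ^ 2 ∂(Measure.map (fun ω => B + ∑ i ∈ Finset.range (K ω), ξ (H i ω)) μ) =
        ∫ ω, ξ (B + ∑ i ∈ Finset.range (K ω), ξ (H i ω)) ^ 2 ∂μ :=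
      integral_map hBS_meas.aemeasurable (hξm.pow_const 2).aestronglyMeasurable
    rw [hq, ← e1, hfix, e2]
  have hint2' : Integrable (fun ω => ξ (B + ∑ i ∈ Finset.range (K ω), ξ (H i ω)) ^ 2) μ := by
    have h1 : Integrable (fun x => ξ x ^ 2) (Measure.map h μ) :=
      (integrable_map_measure (hξm.pow_const 2).aestronglyMeasurable hmeas.aemeasurable).mpr hint2
    rw [hfix] at h1
    exact (integrable_map_measure (hξm.pow_const 2).aestronglyMeasurable
      hBS_meas.aemeasurable).mp h1
  have step1 : ENNReal.ofReal q =
      ∫⁻ ω, ENNReal.ofReal (ξ (B + ∑ i ∈ Finset.range (K ω), ξ (H i ω)) ^ 2) ∂μ := by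
    rw [hmain_eq, ofReal_integral_eq_lintegral_ofReal hint2' (ae_of_all _ fun ω => sq_nonneg _)]
  have step2 : ∫⁻ ω, ENNReal.ofReal (ξ (B + ∑ i ∈ Finset.range (K ω), ξ (H i ω)) ^ 2) ∂μ ≤
      ENNReal.ofReal (c ^ 2) *
        ∫⁻ ω, ENNReal.ofReal ((B + ∑ i ∈ Finset.range (K ω), ξ (H i ω)) ^ 2) ∂μ := by
    rw [← lintegral_const_mul' _ _ ENNReal.ofReal_ne_top]
    apply lintegral_mono_ae
    filter_upwards [hSnn] with ω hω
    have hs : 0 ≤ ∑ i ∈ Finset.range (K ω), ξ (H i ω) := hω (K ω)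
    have hBS : 0 ≤ B + ∑ i ∈ Finset.range (K ω), ξ (H i ω) := by linarith
    have h1 := hξ0 _ hBS
    have h2 := hξle _ hBS
    have h3 : ξ (B + ∑ i ∈ Finset.range (K ω), ξ (H i ω)) ^ 2 ≤
        c ^ 2 * (B + ∑ i ∈ Finset.range (K ω), ξ (H i ω)) ^ 2 := by nlinarith
    calc ENNReal.ofReal (ξ (B + ∑ i ∈ Finset.range (K ω), ξ (H i ω)) ^ 2)
        ≤ ENNReal.ofReal (c ^ 2 * (B + ∑ i ∈ Finset.range (K ω), ξ (H i ω)) ^ 2) :=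
          ENNReal.ofReal_le_ofReal h3
      _ = ENNReal.ofReal (c ^ 2) *
          ENNReal.ofReal ((B + ∑ i ∈ Finset.range (K ω), ξ (H i ω)) ^ 2) :=
          ENNReal.ofReal_mul (sq_nonneg c)
  have step3 : ∫⁻ ω, ENNReal.ofReal ((B + ∑ i ∈ Finset.range (K ω), ξ (H i ω)) ^ 2) ∂μ =
      ENNReal.ofReal (B ^ 2) + ENNReal.ofReal (2 * B) * (ENNReal.ofReal ν * ENNReal.ofReal m) +
        (ENNReal.ofReal ν * ENNReal.ofReal q + ENNReal.ofReal ν₂ * ENNReal.ofReal (m ^ 2)) := by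
    have e : ∀ᵐ ω ∂μ, ENNReal.ofReal ((B + ∑ i ∈ Finset.range (K ω), ξ (H i ω)) ^ 2) =
        ENNReal.ofReal (B ^ 2) +
          ENNReal.ofReal (2 * B) * ENNReal.ofReal (∑ i ∈ Finset.range (K ω), ξ (H i ω)) +
          ENNReal.ofReal ((∑ i ∈ Finset.range (K ω), ξ (H i ω)) ^ 2) := by
      filter_upwards [hSnn] with ω hω
      have hs : 0 ≤ ∑ i ∈ Finset.range (K ω), ξ (H i ω) := hω (K ω)
      rw [show (B + ∑ i ∈ Finset.range (K ω), ξ (H i ω)) ^ 2 =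
          B ^ 2 + (2 * B * (∑ i ∈ Finset.range (K ω), ξ (H i ω)) +
            (∑ i ∈ Finset.range (K ω), ξ (H i ω)) ^ 2) by ring,
        ENNReal.ofReal_add (sq_nonneg B)
          (add_nonneg (mul_nonneg (by linarith) hs) (sq_nonneg _)),
        ENNReal.ofReal_add (mul_nonneg (by linarith) hs) (sq_nonneg _),
        ENNReal.ofReal_mul (by linarith : (0:ℝ) ≤ 2 * B), add_assoc]
    rw [lintegral_congr_ae e,
      lintegral_add_right _ ((hS_meas.pow_const 2).ennreal_ofReal),
      lintegral_add_left measurable_const,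
      lintegral_const, measure_univ, mul_one,
      lintegral_const_mul' _ _ ENNReal.ofReal_ne_top,
      hLS, hLS2]
  -- put everything together in ℝ≥0∞ and come back to ℝ
  have hchain : ENNReal.ofReal q ≤
      ENNReal.ofReal (c ^ 2 * ((B ^ 2 + 2 * B * (ν * m)) + (ν * q + ν₂ * m ^ 2))) := by
    have h1 := step1.le.trans (step2.trans_eq (by rw [step3]))
    refine h1.trans_eq ?_
    rw [← ENNReal.ofReal_mul hν0, ← ENNReal.ofReal_mul (by linarith : (0:ℝ) ≤ 2 * B),
      ← ENNReal.ofReal_mul hν0, ← ENNReal.ofReal_mul hν₂0,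
      ← ENNReal.ofReal_add (mul_nonneg hν0 hq0) (mul_nonneg hν₂0 (sq_nonneg m)),
      ← ENNReal.ofReal_add (sq_nonneg B)
        (mul_nonneg (by linarith) (mul_nonneg hν0 hm0)),
      ← ENNReal.ofReal_add
        (add_nonneg (sq_nonneg B) (mul_nonneg (by linarith) (mul_nonneg hν0 hm0)))
        (add_nonneg (mul_nonneg hν0 hq0) (mul_nonneg hν₂0 (sq_nonneg m))),
      ← ENNReal.ofReal_mul (sq_nonneg c)]
  have hRHS0 : 0 ≤ c ^ 2 * ((B ^ 2 + 2 * B * (ν * m)) + (ν * q + ν₂ * m ^ 2)) :=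
    mul_nonneg (sq_nonneg c)
      (add_nonneg
        (add_nonneg (sq_nonneg B) (mul_nonneg (by linarith) (mul_nonneg hν0 hm0)))
        (add_nonneg (mul_nonneg hν0 hq0) (mul_nonneg hν₂0 (sq_nonneg m))))
  have hreal : q ≤ c ^ 2 * ((B ^ 2 + 2 * B * (ν * m)) + (ν * q + ν₂ * m ^ 2)) :=
    (ENNReal.ofReal_le_ofReal_iff hRHS0).mp hchain
  have hd : 0 < 1 - c ^ 2 * ν := by linarith
  rw [div_mul_eq_mul_div, ← add_div, le_div_iff₀ hd]
  nlinarith [hreal]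
end
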